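/- For all n, k ≥ 1, the number of good tableaux of shape ⟨(k+1)^n⟩ equals the number of standard Young tableaux of shape ⟨(k+1)^n⟩. -/

import Mathlib

/-- The word `w` (a sequence of distinct values) contains the pattern `p`. -/
def ContainsPat {N s : ℕ} {α : Type*} [LinearOrder α]
    (w : Fin N → α) (p : Fin s → ℕ) : Prop :=
  ∃ f : Fin s → Fin N, StrictMono f ∧ ∀ a b : Fin s, p a < p b ↔ w (f a) < w (f b)

/-- The word `w` avoids the pattern `p`. -/
def AvoidsPat {N s : ℕ} {α : Type*} [LinearOrder α]
    (w : Fin N → α) (p : Fin s → ℕ) : Prop :=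
  ¬ ContainsPat w p

/-- The monotone (identity) pattern `1 2 ⋯ m`. -/
def MonoPat (m : ℕ) : Fin m → ℕ := fun i => (i : ℕ)

/-- Position of the entry `w_{i,j}` (with `i`, `j` 0-indexed) of a word of length `n * k`
written in `n` consecutive blocks of length `k`. -/
def Lpos (n k i j : ℕ) (hi : i < n) (hj : j < k) : Fin (n * k) :=
  ⟨i * k + j, by
    calc i * k + j < i * k + k := by omega
      _ = (i + 1) * k := by ring
      _ ≤ n * k := Nat.mul_le_mul (Nat.succ_le_of_lt hi) (le_refl k)⟩

/-- Membership in `L_{n,k}`: conditions (L1) and (L2). -/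
def MemL (n k : ℕ) (w : Equiv.Perm (Fin (n * k))) : Prop :=
  (∀ (i j : ℕ) (hi : i < n) (hj : j + 1 < k),
      w (Lpos n k i j hi (by omega)) < w (Lpos n k i (j + 1) hi hj)) ∧
  (∀ (i j : ℕ) (hi : i + 1 < n) (hj : j + 1 < k),
      w (Lpos n k (i + 1) j hi (by omega)) < w (Lpos n k i (j + 1) (by omega) hj))

/-- Position of the entry `w_{i,j}` (`i`, `j` 0-indexed) among the `n` blocks of length `k`
following the initial block of length `r`. -/
def LrPos (n k r i j : ℕ) (hi : i < n) (hj : j < k) : Fin (n * k + r) :=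
  ⟨r + (i * k + j), by
    have h : i * k + j < n * k := by
      calc i * k + j < i * k + k := by omega
        _ = (i + 1) * k := by ring
        _ ≤ n * k := Nat.mul_le_mul (Nat.succ_le_of_lt hi) (le_refl k)
    omega⟩

/-- Membership in `L_{n,k;r}`: conditions (L1′) and (L2′). -/
def MemLr (n k r : ℕ) (w : Equiv.Perm (Fin (n * k + r))) : Prop :=
  (∀ (j : ℕ) (hj : j + 1 < r), w ⟨j, by omega⟩ < w ⟨j + 1, by omega⟩) ∧
  (∀ (i j : ℕ) (hi : i < n) (hj : j + 1 < k),
      w (LrPos n k r i j hi (by omega)) < w (LrPos n k r i (j + 1) hi hj)) ∧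
  (∀ (i j : ℕ) (hi : i + 1 < n) (hj : j + 1 < k),
      w (LrPos n k r (i + 1) j hi (by omega)) < w (LrPos n k r i (j + 1) (by omega) hj)) ∧
  (∀ (j : ℕ) (hj : j < r) (h : r + j < n * k + r), w ⟨r + j, h⟩ < w ⟨j, by omega⟩)

/-- `w` is an (up-down) alternating permutation: `w_1 < w_2 > w_3 < w_4 > ⋯`. -/
def IsAlternating {m : ℕ} (w : Equiv.Perm (Fin m)) : Prop :=
  ∀ (i : ℕ) (h : i + 1 < m),
    (Even i → w ⟨i, Nat.lt_of_succ_lt h⟩ < w ⟨i + 1, h⟩) ∧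
    (¬ Even i → w ⟨i + 1, h⟩ < w ⟨i, Nat.lt_of_succ_lt h⟩)

/-- `f : ℕ → ℕ` (0-indexed parts) is a partition: weakly decreasing, eventually zero. -/
def IsPartitionFun (f : ℕ → ℕ) : Prop :=
  (∀ i, f (i + 1) ≤ f i) ∧ ∃ N, ∀ i, N ≤ i → f i = 0

/-- The rectangular partition `⟨m^n⟩` as a function. -/
def RectShape (n m : ℕ) : ℕ → ℕ := fun i => if i < n then m else 0

/-- `c = (i, j)` (0-indexed row `i`, column `j`) is a box of the skew diagram `λ/μ`. -/
def IsCell (lam mu : ℕ → ℕ) (c : ℕ × ℕ) : Prop :=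
  mu c.1 ≤ c.2 ∧ c.2 < lam c.1

/-- A standard Young tableau of skew shape `λ/μ`: a filling of the boxes by `1, …, m`
(each used once, `m` = number of boxes), strictly increasing along rows and columns.
Boxes outside of the shape are filled with `0`. -/
structure SkewSYT (lam mu : ℕ → ℕ) where
  entry : ℕ × ℕ → ℕ
  entry_outside : ∀ c, ¬ IsCell lam mu c → entry c = 0
  entry_pos : ∀ c, IsCell lam mu c → 1 ≤ entry c
  entry_inj : ∀ c c', IsCell lam mu c → IsCell lam mu c' → entry c = entry c' → c = c'
  entry_init : ∀ c, IsCell lam mu c → ∀ v, 1 ≤ v → v < entry c →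
      ∃ c', IsCell lam mu c' ∧ entry c' = v
  row_strict : ∀ i j j', IsCell lam mu (i, j) → IsCell lam mu (i, j') → j < j' →
      entry (i, j) < entry (i, j')
  col_strict : ∀ i i' j, IsCell lam mu (i, j) → IsCell lam mu (i', j) → i < i' →
      entry (i, j) < entry (i', j)

/-- `c` comes strictly before `c'` in reading order (last row first, rows left to right). -/
def ReadLT (c c' : ℕ × ℕ) : Prop :=
  c'.1 < c.1 ∨ (c.1 = c'.1 ∧ c.2 < c'.2)

/-- The reading word of the tableau `T` contains the pattern `p`. -/
def ReadingContains {lam mu : ℕ → ℕ} (T : SkewSYT lam mu) {s : ℕ} (p : Fin s → ℕ) : Prop :=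
  ∃ c : Fin s → ℕ × ℕ,
    (∀ a, IsCell lam mu (c a)) ∧
    (∀ a b : Fin s, a < b → ReadLT (c a) (c b)) ∧
    (∀ a b : Fin s, p a < p b ↔ T.entry (c a) < T.entry (c b))

/-- Number of boxes of the skew diagram `λ/μ`. -/
noncomputable def NumCells (lam mu : ℕ → ℕ) : ℕ := Set.ncard {c : ℕ × ℕ | IsCell lam mu c}

/-- The `j`-th part (1-indexed) of the conjugate partition of `λ`:
the number of rows of `λ` of length at least `j`. -/
noncomputable def ConjPart (lam : ℕ → ℕ) (j : ℕ) : ℕ := Set.ncard {i : ℕ | j ≤ lam i}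

/-- A good tableau of shape `⟨(k+1)^n⟩`: rows 0-indexed by `Fin n`, columns by `Fin (k+1)`.
(G1): each row starts with `1`, strictly increases, and its last entry is at most
`(n−i+1)k+1` (1-indexed row `i`); (G2): `T_{i,j} ≤ T_{i+1,j} + j − 1` (1-indexed `j`). -/
structure GoodTableau (n k : ℕ) where
  entry : Fin n → Fin (k + 1) → ℕ
  g1_first : ∀ i, entry i 0 = 1
  g1_mono : ∀ i, StrictMono (entry i)
  g1_last : ∀ i : Fin n, entry i (Fin.last k) ≤ (n - (i : ℕ)) * k + 1
  g2 : ∀ (i : ℕ) (h : i + 1 < n) (j : Fin (k + 1)),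
      entry ⟨i, Nat.lt_of_succ_lt h⟩ j ≤ entry ⟨i + 1, h⟩ j + (j : ℕ)

namespace Stmt4Aux

/-- A downward-closed finset of positive naturals is an initial interval. -/
lemma eq_Icc_of_downclosed (E : Finset ℕ) (h0 : 0 ∉ E)
    (hd : ∀ v ∈ E, ∀ w, 1 ≤ w → w ≤ v → w ∈ E) : E = Finset.Icc 1 E.card := by
  have hsub : E ⊆ Finset.Icc 1 E.card := by
    intro v hv
    have h1 : 1 ≤ v := by
      rcases Nat.eq_zero_or_pos v with h | h
      · exact absurd (h ▸ hv) h0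
      · exact h
    have hs : Finset.Icc 1 v ⊆ E := fun w hw => by
      rw [Finset.mem_Icc] at hw; exact hd v hv w hw.1 hw.2
    have := Finset.card_le_card hs
    simp [Nat.card_Icc] at this
    exact Finset.mem_Icc.2 ⟨h1, this⟩
  exact Finset.eq_of_subset_of_card_le hsub (by simp)

variable (K : ℕ) (t : ℕ → ℕ)

/-- Position of an old element of rank `r` after inserting the elements `t 0 < ⋯ < t (K-1)`. -/
def insCnt (r : ℕ) : ℕ := ((Finset.range K).filter (fun j => t j ≤ r + j)).card

def insPhi (r : ℕ) : ℕ := r + insCnt K t r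

lemma insCnt_le (r : ℕ) : insCnt K t r ≤ K := by
  simpa [insCnt] using Finset.card_le_card (Finset.filter_subset _ (Finset.range K))

lemma insCnt_mono {r r' : ℕ} (h : r ≤ r') : insCnt K t r ≤ insCnt K t r' := by
  apply Finset.card_le_card
  intro j hj
  simp only [Finset.mem_filter, Finset.mem_range] at hj ⊢
  exact ⟨hj.1, hj.2.trans (by omega)⟩

lemma insPhi_mono {r r' : ℕ} (h : r ≤ r') : insPhi K t r ≤ insPhi K t r' := by
  have := insCnt_mono K t h; unfold insPhi; omega

lemma insPhi_strictMono {r r' : ℕ} (h : r < r') : insPhi K t r < insPhi K t r' := by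
  have := insCnt_mono K t (le_of_lt h); unfold insPhi; omega

lemma insPhi_lt_iff {r r' : ℕ} : insPhi K t r < insPhi K t r' ↔ r < r' := by
  constructor
  · intro h; by_contra hc; push_neg at hc; exact absurd h (not_lt.2 (insPhi_mono K t hc))
  · exact insPhi_strictMono K t

/-- gap lemma for strictly increasing on a range -/
lemma gap_of_mono (hm : ∀ a b, a < b → b < K → t a < t b) :
    ∀ j' j, j' ≤ j → j < K → t j' + (j - j') ≤ t j := by
  have key : ∀ d j', j' + d < K → t j' + d ≤ t (j' + d) := by
    intro d
    induction d with
    | zero => intro j' _; simp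
    | succ d ih =>
      intro j' h
      have h1 : t j' + d ≤ t (j' + d) := ih j' (by omega)
      have h2 : t (j' + d) < t (j' + d + 1) := hm _ _ (by omega) (by omega)
      show t j' + (d + 1) ≤ t (j' + d + 1)
      omega
  intro j' j hle hK
  have h := key (j - j') j' (by omega)
  rwa [show j' + (j - j') = j by omega] at h

section
variable (hm : ∀ a b, a < b → b < K → t a < t b)

include hm in
/-- down-set property of the insertion filter -/
lemma ins_downset {r j j' : ℕ} (hj' : j' ≤ j) (hj : j < K) (h : t j ≤ r + j) :
    t j' ≤ r + j' := by
  have h2 := gap_of_mono K t hm j' j hj' hj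
  omega

include hm in
lemma insCnt_ge {r j : ℕ} (hj : j < K) (h : t j ≤ r + j) : j + 1 ≤ insCnt K t r := by
  have hsub : Finset.range (j + 1) ⊆ (Finset.range K).filter (fun j => t j ≤ r + j) := by
    intro j' hj'
    simp only [Finset.mem_range] at hj'
    simp only [Finset.mem_filter, Finset.mem_range]
    exact ⟨by omega, ins_downset K t hm (by omega) hj h⟩
  simpa [insCnt] using Finset.card_le_card hsub

include hm in
lemma insPhi_ne_t {r j : ℕ} (hj : j < K) : insPhi K t r ≠ t j := by
  intro heq
  by_cases h : t j ≤ r + j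
  · have := insCnt_ge K t hm hj h
    unfold insPhi at heq; omega
  · push_neg at h
    have hsub : (Finset.range K).filter (fun j' => t j' ≤ r + j') ⊆ Finset.range j := by
      intro j' hj'
      simp only [Finset.mem_filter, Finset.mem_range] at hj'
      simp only [Finset.mem_range]
      by_contra hc
      push_neg at hc
      exact absurd (ins_downset K t hm hc hj'.1 hj'.2) (by omega)
    have hle : insCnt K t r ≤ j := by
      simpa [insCnt] using Finset.card_le_card hsub
    unfold insPhi at heq; omega

end

section
variable (K : ℕ) (t : ℕ → ℕ)

section
variable (M : ℕ) (hm : ∀ a b, a < b → b < K → t a < t b)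
  (h1 : ∀ j, j < K → j + 1 ≤ t j) (h2 : ∀ j, j < K → t j ≤ M + j + 1)

include hm in
lemma ins_disjoint :
    Disjoint ((Finset.Icc 1 M).image (insPhi K t)) ((Finset.range K).image t) := by
  rw [Finset.disjoint_left]
  rintro v hv hv'
  simp only [Finset.mem_image, Finset.mem_Icc, Finset.mem_range] at hv hv'
  obtain ⟨r, _, hr⟩ := hv
  obtain ⟨j, hj, hjv⟩ := hv'
  exact insPhi_ne_t K t hm hj (hr.trans hjv.symm)

include hm h1 h2 in
lemma ins_union :
    ((Finset.Icc 1 M).image (insPhi K t)) ∪ ((Finset.range K).image t)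
      = Finset.Icc 1 (M + K) := by
  have hB : ((Finset.Icc 1 M).image (insPhi K t)).card = M := by
    rw [Finset.card_image_of_injOn, Nat.card_Icc]; · omega
    intro r _ r' _ h
    by_contra hne
    rcases Nat.lt_or_ge r r' with hlt | hge
    · exact absurd h (Nat.ne_of_lt (insPhi_strictMono K t hlt))
    · have : r' < r := by omega
      exact absurd h.symm (Nat.ne_of_lt (insPhi_strictMono K t this))
  have hA : ((Finset.range K).image t).card = K := by
    rw [Finset.card_image_of_injOn, Finset.card_range]
    intro a ha b hb h
    simp only [Finset.coe_range, Set.mem_Iio] at ha hb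
    by_contra hne
    rcases Nat.lt_or_ge a b with hlt | hge
    · exact absurd h (Nat.ne_of_lt (hm a b hlt hb))
    · exact absurd h.symm (Nat.ne_of_lt (hm b a (by omega) ha))
  have hsub : ((Finset.Icc 1 M).image (insPhi K t)) ∪ ((Finset.range K).image t)
      ⊆ Finset.Icc 1 (M + K) := by
    intro v hv
    simp only [Finset.mem_union, Finset.mem_image, Finset.mem_Icc, Finset.mem_range] at hv
    rcases hv with ⟨r, hr, hrv⟩ | ⟨j, hj, hjv⟩
    · have := insCnt_le K t r
      rw [Finset.mem_Icc]
      unfold insPhi at hrv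
      omega
    · have := h1 j hj
      have := h2 j hj
      rw [Finset.mem_Icc]
      omega
  have hcard : (((Finset.Icc 1 M).image (insPhi K t)) ∪ ((Finset.range K).image t)).card
      = M + K := by
    rw [Finset.card_union_of_disjoint (ins_disjoint K t M hm), hA, hB]
  apply Finset.eq_of_subset_of_card_le hsub
  rw [hcard, Nat.card_Icc]; omega

end
end
end Stmt4Aux
namespace Stmt4Aux

def cellsGe (n k i : ℕ) : Finset (ℕ × ℕ) := (Finset.Ico i n) ×ˢ (Finset.range (k+1))

lemma mem_cellsGe {n k i : ℕ} {c : ℕ × ℕ} :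
    c ∈ cellsGe n k i ↔ (i ≤ c.1 ∧ c.1 < n) ∧ c.2 < k + 1 := by
  simp [cellsGe, Finset.mem_product]

lemma card_cellsGe (n k i : ℕ) : (cellsGe n k i).card = (n - i) * (k + 1) := by
  simp [cellsGe]

lemma cellsGe_split {n k i : ℕ} (h : i < n) :
    cellsGe n k i = ({i} ×ˢ Finset.range (k+1)) ∪ cellsGe n k (i+1) := by
  ext c
  simp only [mem_cellsGe, Finset.mem_union, Finset.mem_product, Finset.mem_singleton,
    Finset.mem_range]
  omega

lemma cellsGe_split_disj {n k i : ℕ} :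
    Disjoint (({i} : Finset ℕ) ×ˢ Finset.range (k+1)) (cellsGe n k (i+1)) := by
  rw [Finset.disjoint_left]
  intro c hc hc'
  simp only [Finset.mem_product, Finset.mem_singleton] at hc
  rw [mem_cellsGe] at hc'
  omega

section GoodSide
variable {n k : ℕ} (T0 : GoodTableau n k)

/-- extension of the good tableau entries to all of `ℕ × ℕ`. -/
def Tf : ℕ → ℕ → ℕ := fun i j =>
  if h : i < n ∧ j < k + 1 then T0.entry ⟨i, h.1⟩ ⟨j, h.2⟩ else 0

lemma Tf_eq {i j : ℕ} (hi : i < n) (hj : j < k + 1) :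
    Tf T0 i j = T0.entry ⟨i, hi⟩ ⟨j, hj⟩ := by
  simp [Tf, hi, hj]

lemma Tf_mono {i : ℕ} (hi : i < n) : ∀ a b, a < b → b < k + 1 → Tf T0 i a < Tf T0 i b := by
  intro a b hab hb
  rw [Tf_eq T0 hi (by omega), Tf_eq T0 hi hb]
  exact T0.g1_mono ⟨i, hi⟩ (show (⟨a, by omega⟩ : Fin (k+1)) < ⟨b, hb⟩ from hab)

lemma Tf_lb {i j : ℕ} (hi : i < n) (hj : j < k + 1) : j + 1 ≤ Tf T0 i j := by
  have h0 : Tf T0 i 0 = 1 := by rw [Tf_eq T0 hi (by omega)]; exact T0.g1_first ⟨i, hi⟩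
  have := gap_of_mono (k+1) (Tf T0 i) (Tf_mono T0 hi) 0 j (by omega) hj
  omega

lemma Tf_ub {i j : ℕ} (hi : i < n) (hj : j < k + 1) :
    Tf T0 i j ≤ (n - (i+1)) * (k + 1) + j + 1 := by
  have hgap := gap_of_mono (k+1) (Tf T0 i) (Tf_mono T0 hi) j k (by omega) (by omega)
  have hlast : Tf T0 i k ≤ (n - i) * k + 1 := by
    rw [Tf_eq T0 hi (by omega)]
    exact T0.g1_last ⟨i, hi⟩
  have h1 : (n - i) * k = (n - (i+1)) * k + k := by
    have : n - i = (n - (i+1)) + 1 := by omega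
    rw [this]; ring
  have h2 : (n - (i+1)) * k ≤ (n - (i+1)) * (k + 1) := Nat.mul_le_mul_left _ (by omega)
  omega

lemma Tf_g2 {i j : ℕ} (hi : i + 1 < n) (hj : j < k + 1) :
    Tf T0 i j ≤ Tf T0 (i+1) j + j := by
  rw [Tf_eq T0 (by omega) hj, Tf_eq T0 (by omega) hj]
  exact T0.g2 i hi ⟨j, hj⟩

end GoodSide

/-- Rank of a cell `c` among the cells in rows `≥ c.1 - d`, reconstructed from the good
tableau data `T`. -/
def rhoA (K : ℕ) (T : ℕ → ℕ → ℕ) (c : ℕ × ℕ) : ℕ → ℕ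
  | 0 => T c.1 c.2
  | d+1 => insPhi K (T (c.1 - (d+1))) (rhoA K T c d)

/-- Rank of a cell `c` among the cells in rows `≥ i`. -/
def rho (K : ℕ) (T : ℕ → ℕ → ℕ) (i : ℕ) (c : ℕ × ℕ) : ℕ := rhoA K T c (c.1 - i)

lemma rho_self (K : ℕ) (T : ℕ → ℕ → ℕ) (c : ℕ × ℕ) : rho K T c.1 c = T c.1 c.2 := by
  simp [rho, rhoA]

lemma rho_self' (K : ℕ) (T : ℕ → ℕ → ℕ) (i j : ℕ) : rho K T i (i, j) = T i j :=
  rho_self K T (i, j)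

lemma rho_step (K : ℕ) (T : ℕ → ℕ → ℕ) {i : ℕ} {c : ℕ × ℕ} (h : i < c.1) :
    rho K T i c = insPhi K (T i) (rho K T (i+1) c) := by
  have h1 : c.1 - i = (c.1 - (i+1)) + 1 := by omega
  rw [rho, h1, rhoA, show c.1 - (c.1 - (i+1) + 1) = i by omega, rho]

end Stmt4Aux
namespace Stmt4Aux
section GoodSide
variable {n k : ℕ} (T0 : GoodTableau n k)

theorem main_ind : ∀ d i, i + d = n →
    ((cellsGe n k i).image (rho (k+1) (Tf T0) i) = Finset.Icc 1 ((n - i) * (k+1)))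
    ∧ (∀ i' j j', i ≤ i' → i' < n → j < j' → j' < k+1 →
        rho (k+1) (Tf T0) i (i',j) < rho (k+1) (Tf T0) i (i',j'))
    ∧ (∀ i' j, i ≤ i' → i'+1 < n → j < k+1 →
        rho (k+1) (Tf T0) i (i',j) < rho (k+1) (Tf T0) i (i'+1,j)) := by
  intro d
  induction d with
  | zero =>
    intro i hi
    refine ⟨?_, ?_, ?_⟩
    · have hemp : cellsGe n k i = ∅ := by
        rw [Finset.eq_empty_iff_forall_notMem]
        intro c hc; rw [mem_cellsGe] at hc; omega
      rw [hemp, show n - i = 0 by omega]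
      simp
    · intro i' j j' h1 h2 _ _; omega
    · intro i' j h1 h2 _; omega
  | succ d IH =>
    intro i hi
    have hin : i < n := by omega
    obtain ⟨IH1, IH2, IH3⟩ := IH (i+1) (by omega)
    set K := k + 1 with hK
    set t := Tf T0 i with ht
    set M := (n - (i+1)) * K with hM
    have hmono : ∀ a b, a < b → b < K → t a < t b := Tf_mono T0 hin
    have h1 : ∀ j, j < K → j + 1 ≤ t j := fun j hj => Tf_lb T0 hin hj
    have h2 : ∀ j, j < K → t j ≤ M + j + 1 := fun j hj => Tf_ub T0 hin hj
    have hstep : ∀ c ∈ cellsGe n k (i+1),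
        rho K (Tf T0) i c = insPhi K t (rho K (Tf T0) (i+1) c) := by
      intro c hc; rw [mem_cellsGe] at hc; exact rho_step K (Tf T0) (by omega)
    have hrow : ({i} ×ˢ Finset.range K).image (rho K (Tf T0) i)
        = (Finset.range K).image t := by
      ext v
      simp only [Finset.mem_image, Finset.mem_product, Finset.mem_singleton, Finset.mem_range]
      constructor
      · rintro ⟨⟨a, b⟩, ⟨ha, hb⟩, hv⟩
        subst ha
        exact ⟨b, hb, by rw [← hv]; exact (rho_self' K (Tf T0) a b).symm⟩
      · rintro ⟨j, hj, hv⟩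
        exact ⟨(i, j), ⟨rfl, hj⟩, by rw [rho_self']; exact hv⟩
    have hupper : (cellsGe n k (i+1)).image (rho K (Tf T0) i)
        = (Finset.Icc 1 M).image (insPhi K t) := by
      rw [← IH1, Finset.image_image]
      exact Finset.image_congr (fun c hc => hstep c (Finset.mem_coe.1 hc))
    have himg : (cellsGe n k i).image (rho K (Tf T0) i) = Finset.Icc 1 ((n - i) * K) := by
      rw [cellsGe_split hin, Finset.image_union, hrow, hupper, Finset.union_comm,
        ins_union K t M hmono h1 h2,
        show M + K = (n - i) * K by
          rw [hM, show n - i = (n - (i+1)) + 1 by omega]; ring]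
    have hP3 : ∀ i' j j', i ≤ i' → i' < n → j < j' → j' < K →
        rho K (Tf T0) i (i',j) < rho K (Tf T0) i (i',j') := by
      intro i' j j' hii' hi'n hjj' hj'
      rcases Nat.eq_or_lt_of_le hii' with rfl | hlt
      · rw [rho_self', rho_self']; exact hmono j j' hjj' hj'
      · rw [rho_step K _ (show i < (i',j).1 from hlt),
          rho_step K _ (show i < (i',j').1 from hlt)]
        exact insPhi_strictMono K t (IH2 i' j j' (by omega) hi'n hjj' hj')
    have hP4 : ∀ i' j, i ≤ i' → i'+1 < n → j < K →
        rho K (Tf T0) i (i',j) < rho K (Tf T0) i (i'+1,j) := by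
      intro i' j hii' hi' hj
      rcases Nat.eq_or_lt_of_le hii' with rfl | hlt
      · rw [rho_self', rho_step K _ (show i < (i+1, j).1 from Nat.lt_succ_self i),
          rho_self']
        have hg2 : t j ≤ Tf T0 (i+1) j + j := Tf_g2 T0 hi' hj
        have hcnt := insCnt_ge K t hmono hj hg2
        rw [← ht]
        unfold insPhi; omega
      · rw [rho_step K _ (show i < (i',j).1 from hlt),
          rho_step K _ (show i < (i'+1,j).1 by omega)]
        exact insPhi_strictMono K t (IH3 i' j (by omega) hi' hj)
    exact ⟨himg, hP3, hP4⟩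

lemma rho_image (i : ℕ) (hi : i ≤ n) :
    (cellsGe n k i).image (rho (k+1) (Tf T0) i) = Finset.Icc 1 ((n - i) * (k+1)) :=
  (main_ind T0 (n - i) i (by omega)).1

lemma rho_injOn (i : ℕ) (hi : i ≤ n) :
    Set.InjOn (rho (k+1) (Tf T0) i) (cellsGe n k i) := by
  apply Finset.injOn_of_card_image_eq
  rw [rho_image T0 i hi, card_cellsGe, Nat.card_Icc]
  omega

end GoodSide
end Stmt4Aux
namespace Stmt4Aux

lemma cellsGe_anti {n k i : ℕ} : cellsGe n k (i+1) ⊆ cellsGe n k i := by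
  intro c hc; rw [mem_cellsGe] at hc ⊢; omega

lemma cell_iff {n k : ℕ} {c : ℕ × ℕ} :
    IsCell (RectShape n (k+1)) (fun _ => 0) c ↔ c ∈ cellsGe n k 0 := by
  rw [mem_cellsGe]
  unfold IsCell RectShape
  constructor
  · rintro ⟨-, h2⟩
    by_cases h : c.1 < n
    · rw [if_pos h] at h2; omega
    · rw [if_neg h] at h2; omega
  · rintro ⟨⟨-, h1⟩, h2⟩
    exact ⟨Nat.zero_le _, by rw [if_pos h1]; omega⟩

section GoodSide
variable {n k : ℕ} (T0 : GoodTableau n k)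

lemma rho_zero_lt_iff (i : ℕ) {c c' : ℕ × ℕ}
    (hc : c ∈ cellsGe n k i) (hc' : c' ∈ cellsGe n k i) :
    rho (k+1) (Tf T0) 0 c < rho (k+1) (Tf T0) 0 c' ↔
      rho (k+1) (Tf T0) i c < rho (k+1) (Tf T0) i c' := by
  induction i with
  | zero => rfl
  | succ i IH =>
    have hc0 : c ∈ cellsGe n k i := cellsGe_anti hc
    have hc0' : c' ∈ cellsGe n k i := cellsGe_anti hc'
    rw [IH hc0 hc0']
    rw [mem_cellsGe] at hc hc'
    rw [rho_step (k+1) (Tf T0) (show i < c.1 by omega),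
      rho_step (k+1) (Tf T0) (show i < c'.1 by omega)]
    exact insPhi_lt_iff (k+1) (Tf T0 i)

lemma rho_rank (i : ℕ) (hi : i ≤ n) {c : ℕ × ℕ} (hc : c ∈ cellsGe n k i) :
    ((cellsGe n k i).filter
        (fun c' => rho (k+1) (Tf T0) 0 c' ≤ rho (k+1) (Tf T0) 0 c)).card
      = rho (k+1) (Tf T0) i c := by
  have hiff : ∀ c' ∈ cellsGe n k i,
      (rho (k+1) (Tf T0) 0 c' ≤ rho (k+1) (Tf T0) 0 c ↔
        rho (k+1) (Tf T0) i c' ≤ rho (k+1) (Tf T0) i c) := by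
    intro c' hc'
    rw [← not_lt, ← not_lt, rho_zero_lt_iff T0 i hc hc']
  rw [Finset.filter_congr hiff]
  have h2 : ((cellsGe n k i).filter
      (fun c' => rho (k+1) (Tf T0) i c' ≤ rho (k+1) (Tf T0) i c)).card
      = ((Finset.Icc 1 ((n-i)*(k+1))).filter
          (fun v => v ≤ rho (k+1) (Tf T0) i c)).card := by
    rw [← rho_image T0 i hi, Finset.filter_image]
    exact (Finset.card_image_of_injOn
      ((rho_injOn T0 i hi).mono (Finset.coe_subset.2 (Finset.filter_subset _ _)))).symm
  rw [h2]
  have hv : rho (k+1) (Tf T0) i c ∈ Finset.Icc 1 ((n-i)*(k+1)) := by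
    rw [← rho_image T0 i hi]; exact Finset.mem_image_of_mem _ hc
  rw [Finset.mem_Icc] at hv
  have h3 : (Finset.Icc 1 ((n-i)*(k+1))).filter (fun v => v ≤ rho (k+1) (Tf T0) i c)
      = Finset.Icc 1 (rho (k+1) (Tf T0) i c) := by
    ext w
    simp only [Finset.mem_filter, Finset.mem_Icc]
    omega
  rw [h3, Nat.card_Icc]
  omega

lemma rho_col_strict {i i' j : ℕ} (hii' : i < i') (hi' : i' < n) (hj : j < k+1) :
    rho (k+1) (Tf T0) 0 (i, j) < rho (k+1) (Tf T0) 0 (i', j) := by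
  have hP4 := (main_ind T0 n 0 (by omega)).2.2
  have key : ∀ m, i + 1 ≤ m → m < n → rho (k+1) (Tf T0) 0 (i, j) < rho (k+1) (Tf T0) 0 (m, j) := by
    intro m hm
    induction m, hm using Nat.le_induction with
    | base => intro h; exact hP4 i j (Nat.zero_le _) h hj
    | succ m hm IH =>
      intro h
      exact (IH (by omega)).trans (hP4 m j (Nat.zero_le _) h hj)
  exact key i' hii' hi'

/-- The inverse map: build a skew SYT from a good tableau. -/
def PsiSYT : SkewSYT (RectShape n (k+1)) (fun _ => 0) where
  entry c := if c ∈ cellsGe n k 0 then rho (k+1) (Tf T0) 0 c else 0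
  entry_outside c hc := by
    rw [cell_iff] at hc
    simp only [if_neg hc]
  entry_pos c hc := by
    rw [cell_iff] at hc
    simp only [if_pos hc]
    have : rho (k+1) (Tf T0) 0 c ∈ Finset.Icc 1 ((n-0)*(k+1)) := by
      rw [← rho_image T0 0 (Nat.zero_le _)]; exact Finset.mem_image_of_mem _ hc
    rw [Finset.mem_Icc] at this
    exact this.1
  entry_inj c c' hc hc' h := by
    rw [cell_iff] at hc hc'
    simp only [if_pos hc, if_pos hc'] at h
    exact rho_injOn T0 0 (Nat.zero_le _) (Finset.mem_coe.2 hc) (Finset.mem_coe.2 hc') h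
  entry_init c hc v hv1 hv2 := by
    rw [cell_iff] at hc
    simp only [if_pos hc] at hv2
    have hmem : rho (k+1) (Tf T0) 0 c ∈ Finset.Icc 1 ((n-0)*(k+1)) := by
      rw [← rho_image T0 0 (Nat.zero_le _)]; exact Finset.mem_image_of_mem _ hc
    rw [Finset.mem_Icc] at hmem
    have : v ∈ Finset.Icc 1 ((n-0)*(k+1)) := by rw [Finset.mem_Icc]; omega
    rw [← rho_image T0 0 (Nat.zero_le _), Finset.mem_image] at this
    obtain ⟨c', hc', hc'v⟩ := this
    exact ⟨c', cell_iff.2 hc', by simp only [if_pos hc']; exact hc'v⟩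
  row_strict i j j' hc hc' hjj' := by
    rw [cell_iff] at hc hc'
    simp only [if_pos hc, if_pos hc']
    rw [mem_cellsGe] at hc hc'
    exact (main_ind T0 n 0 (by omega)).2.1 i j j' (Nat.zero_le _) hc.1.2 hjj' hc'.2
  col_strict i i' j hc hc' hii' := by
    rw [cell_iff] at hc hc'
    simp only [if_pos hc, if_pos hc']
    rw [mem_cellsGe] at hc hc'
    exact rho_col_strict T0 hii' hc'.1.2 hc.2

lemma psi_rank {i j : ℕ} (hi : i < n) (hj : j < k+1) :
    ((cellsGe n k i).filter
        (fun c' => rho (k+1) (Tf T0) 0 c' ≤ rho (k+1) (Tf T0) 0 (i, j))).card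
      = Tf T0 i j := by
  rw [rho_rank T0 i hi.le (mem_cellsGe.2 ⟨⟨le_refl i, hi⟩, hj⟩), rho_self']

end GoodSide
end Stmt4Aux
namespace Stmt4Aux

lemma cellsGe_subset_zero {n k i : ℕ} : cellsGe n k i ⊆ cellsGe n k 0 := by
  intro c hc; rw [mem_cellsGe] at hc ⊢; omega

lemma insPhi_congr {K : ℕ} {t t' : ℕ → ℕ} (h : ∀ j, j < K → t j = t' j) (r : ℕ) :
    insPhi K t r = insPhi K t' r := by
  unfold insPhi insCnt
  congr 1
  apply congrArg
  apply Finset.filter_congr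
  intro j hj
  rw [Finset.mem_range] at hj
  rw [h j hj]

lemma card_filter_le_eq {A : Finset (ℕ×ℕ)} {f : ℕ×ℕ → ℕ} {N : ℕ}
    (himg : A.image f = Finset.Icc 1 N) (hinj : Set.InjOn f ↑A) {c} (hc : c ∈ A) :
    (A.filter (fun c' => f c' ≤ f c)).card = f c := by
  have h2 : (A.filter (fun c' => f c' ≤ f c)).card
      = ((Finset.Icc 1 N).filter (fun v => v ≤ f c)).card := by
    rw [← himg, Finset.filter_image]
    exact (Finset.card_image_of_injOn
      (hinj.mono (Finset.coe_subset.2 (Finset.filter_subset _ _)))).symm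
  have hv : f c ∈ Finset.Icc 1 N := by rw [← himg]; exact Finset.mem_image_of_mem _ hc
  rw [Finset.mem_Icc] at hv
  rw [h2, show (Finset.Icc 1 N).filter (fun v => v ≤ f c) = Finset.Icc 1 (f c) by
    ext w; simp only [Finset.mem_filter, Finset.mem_Icc]; omega, Nat.card_Icc]
  omega

section SYTSide
variable {n k : ℕ} (S : SkewSYT (RectShape n (k+1)) (fun _ => 0))

/-- rank of the entry of `c` among the entries in rows `≥ i`. -/
def rk (i : ℕ) (c : ℕ × ℕ) : ℕ :=
  ((cellsGe n k i).filter (fun c' => S.entry c' ≤ S.entry c)).card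

lemma entry_injOn : Set.InjOn S.entry ↑(cellsGe n k 0) := fun c hc c' hc' h =>
  S.entry_inj c c' (cell_iff.2 (Finset.mem_coe.1 hc)) (cell_iff.2 (Finset.mem_coe.1 hc')) h

lemma entry_image : (cellsGe n k 0).image S.entry = Finset.Icc 1 (n * (k+1)) := by
  have hcard : ((cellsGe n k 0).image S.entry).card = n * (k+1) := by
    rw [Finset.card_image_of_injOn (entry_injOn S), card_cellsGe, Nat.sub_zero]
  have h0 : 0 ∉ (cellsGe n k 0).image S.entry := by
    rw [Finset.mem_image]
    rintro ⟨c, hc, hc0⟩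
    have := S.entry_pos c (cell_iff.2 hc)
    omega
  have hd : ∀ v ∈ (cellsGe n k 0).image S.entry, ∀ w, 1 ≤ w → w ≤ v →
      w ∈ (cellsGe n k 0).image S.entry := by
    intro v hv w hw1 hwv
    rw [Finset.mem_image] at hv ⊢
    obtain ⟨c, hc, rfl⟩ := hv
    rcases Nat.eq_or_lt_of_le hwv with rfl | hlt
    · exact ⟨c, hc, rfl⟩
    · obtain ⟨c', hc', hc'w⟩ := S.entry_init c (cell_iff.2 hc) w hw1 hlt
      exact ⟨c', cell_iff.1 hc', hc'w⟩
  have := eq_Icc_of_downclosed _ h0 hd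
  rw [hcard] at this
  exact this

lemma rk_zero {c : ℕ × ℕ} (hc : c ∈ cellsGe n k 0) : rk S 0 c = S.entry c :=
  card_filter_le_eq (entry_image S) (entry_injOn S) hc

lemma rk_split (i : ℕ) (hi : i < n) (c : ℕ × ℕ) :
    rk S i c = ((Finset.range (k+1)).filter (fun j => S.entry (i, j) ≤ S.entry c)).card
      + rk S (i+1) c := by
  unfold rk
  rw [cellsGe_split hi, Finset.filter_union,
    Finset.card_union_of_disjoint
      (Finset.disjoint_filter_filter cellsGe_split_disj)]
  congr 1
  rw [Finset.singleton_product, Finset.filter_map, Finset.card_map]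
  rfl

lemma entry_row_lt {i j j' : ℕ} (hi : i < n) (hj : j < k+1) (hj' : j' < k+1) (h : j < j') :
    S.entry (i, j) < S.entry (i, j') :=
  S.row_strict i j j' (cell_iff.2 (mem_cellsGe.2 ⟨⟨Nat.zero_le _, hi⟩, hj⟩))
    (cell_iff.2 (mem_cellsGe.2 ⟨⟨Nat.zero_le _, hi⟩, hj'⟩)) h

lemma entry_col_lt {i i' j : ℕ} (hi' : i' < n) (hj : j < k+1) (h : i < i') :
    S.entry (i, j) < S.entry (i', j) :=
  S.col_strict i i' j (cell_iff.2 (mem_cellsGe.2 ⟨⟨Nat.zero_le _, by omega⟩, hj⟩))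
    (cell_iff.2 (mem_cellsGe.2 ⟨⟨Nat.zero_le _, hi'⟩, hj⟩)) h

lemma row_count {i j : ℕ} (hi : i < n) (hj : j < k+1) :
    ((Finset.range (k+1)).filter (fun j' => S.entry (i, j') ≤ S.entry (i, j))).card
      = j + 1 := by
  have : (Finset.range (k+1)).filter (fun j' => S.entry (i, j') ≤ S.entry (i, j))
      = Finset.range (j+1) := by
    ext j'
    simp only [Finset.mem_filter, Finset.mem_range]
    constructor
    · rintro ⟨h1, h2⟩
      by_contra hc
      exact absurd h2 (not_le.2 (entry_row_lt S hi hj h1 (by omega)))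
    · intro h1
      refine ⟨by omega, ?_⟩
      rcases Nat.eq_or_lt_of_le (Nat.le_of_lt_succ h1) with rfl | hlt
      · exact le_refl _
      · exact (entry_row_lt S hi (by omega) hj hlt).le
  rw [this, Finset.card_range]

lemma rk_cmp (i : ℕ) (hi : i < n) {c : ℕ×ℕ} (hc : c ∈ cellsGe n k (i+1)) {j : ℕ}
    (hj : j < k+1) :
    S.entry (i, j) ≤ S.entry c ↔ rk S i (i,j) ≤ rk S (i+1) c + j := by
  have hcell : (i, j) ∈ cellsGe n k 0 := mem_cellsGe.2 ⟨⟨Nat.zero_le _, hi⟩, hj⟩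
  have hc0 : c ∈ cellsGe n k 0 := cellsGe_subset_zero hc
  have hc1 : i + 1 ≤ c.1 ∧ c.1 < n ∧ c.2 < k + 1 := by rw [mem_cellsGe] at hc; exact ⟨hc.1.1, hc.1.2, hc.2⟩
  have hsplit : rk S i (i, j) = (j + 1) + rk S (i+1) (i, j) := by
    rw [rk_split S i hi, row_count S hi hj]
  have hne : S.entry (i, j) ≠ S.entry c := by
    intro h
    have := S.entry_inj _ _ (cell_iff.2 hcell) (cell_iff.2 hc0) h
    have : i = c.1 := congrArg Prod.fst this
    omega
  constructor
  · intro hle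
    have hlt : S.entry (i, j) < S.entry c := lt_of_le_of_ne hle hne
    have hss : (cellsGe n k (i+1)).filter (fun c' => S.entry c' ≤ S.entry (i, j))
        ⊂ (cellsGe n k (i+1)).filter (fun c' => S.entry c' ≤ S.entry c) := by
      rw [Finset.ssubset_iff_of_subset
        (Finset.monotone_filter_right _ (fun c' _ hc' => le_trans hc' hlt.le))]
      exact ⟨c, Finset.mem_filter.2 ⟨hc, le_refl _⟩,
        fun h => absurd (Finset.mem_filter.1 h).2 (not_le.2 hlt)⟩
    have := Finset.card_lt_card hss
    unfold rk at this hsplit ⊢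
    omega
  · intro hle
    by_contra hc'
    push_neg at hc'
    have hsub : (cellsGe n k (i+1)).filter (fun c' => S.entry c' ≤ S.entry c)
        ⊆ (cellsGe n k (i+1)).filter (fun c' => S.entry c' ≤ S.entry (i, j)) :=
      Finset.monotone_filter_right _ (fun c' _ hcc => le_trans hcc hc'.le)
    have := Finset.card_le_card hsub
    unfold rk at this hle hsplit
    omega

lemma rk_rec (i : ℕ) (hi : i < n) {c : ℕ×ℕ} (hc : c ∈ cellsGe n k (i+1)) :
    rk S i c = insPhi (k+1) (fun j => rk S i (i,j)) (rk S (i+1) c) := by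
  rw [rk_split S i hi c]
  have hcong : ((Finset.range (k+1)).filter (fun j => S.entry (i, j) ≤ S.entry c)).card
      = ((Finset.range (k+1)).filter (fun j => rk S i (i,j) ≤ rk S (i+1) c + j)).card := by
    apply congrArg
    apply Finset.filter_congr
    intro j hj
    rw [Finset.mem_range] at hj
    exact rk_cmp S i hi hc hj
  unfold insPhi insCnt
  show ((Finset.range (k+1)).filter (fun j => S.entry (i, j) ≤ S.entry c)).card
      + rk S (i+1) c = rk S (i+1) c
      + ((Finset.range (k+1)).filter (fun j => rk S i (i,j) ≤ rk S (i+1) c + j)).card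
  omega

/-- The forward map: ranks within lower rows of a skew SYT form a good tableau. -/
def PhiGT : GoodTableau n k where
  entry i j := rk S (i : ℕ) ((i : ℕ), (j : ℕ))
  g1_first i := by
    have hi : (i : ℕ) < n := i.isLt
    show rk S (i : ℕ) ((i : ℕ), ((0 : Fin (k+1)) : ℕ)) = 1
    rw [show ((0 : Fin (k+1)) : ℕ) = 0 from rfl, rk_split S _ hi, row_count S hi (by omega)]
    have hz : rk S ((i : ℕ)+1) ((i : ℕ), 0) = 0 := by
      unfold rk
      rw [Finset.card_eq_zero, Finset.filter_eq_empty_iff]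
      intro c' hc'
      rw [mem_cellsGe] at hc'
      have h1 : S.entry ((i : ℕ), 0) ≤ S.entry ((i : ℕ), c'.2) := by
        rcases Nat.eq_zero_or_pos c'.2 with h | h
        · rw [h]
        · exact (entry_row_lt S hi (by omega) hc'.2 h).le
      have h2 : S.entry ((i : ℕ), c'.2) < S.entry (c'.1, c'.2) :=
        entry_col_lt S hc'.1.2 hc'.2 (by omega)
      simp only [not_le]
      calc S.entry ((i:ℕ), 0) ≤ S.entry ((i:ℕ), c'.2) := h1
        _ < S.entry (c'.1, c'.2) := h2
        _ = S.entry c' := by rw [Prod.mk.eta]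
    omega
  g1_mono i := by
    intro j j' hjj'
    have hi : (i : ℕ) < n := i.isLt
    have hss : (cellsGe n k (i:ℕ)).filter (fun c' => S.entry c' ≤ S.entry ((i:ℕ), (j:ℕ)))
        ⊂ (cellsGe n k (i:ℕ)).filter (fun c' => S.entry c' ≤ S.entry ((i:ℕ), (j':ℕ))) := by
      have hlt : S.entry ((i:ℕ), (j:ℕ)) < S.entry ((i:ℕ), (j':ℕ)) :=
        entry_row_lt S hi j.isLt j'.isLt hjj'
      rw [Finset.ssubset_iff_of_subset
        (Finset.monotone_filter_right _ (fun c' _ hc' => le_trans hc' hlt.le))]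
      exact ⟨((i:ℕ), (j':ℕ)),
        Finset.mem_filter.2 ⟨mem_cellsGe.2 ⟨⟨le_refl _, hi⟩, j'.isLt⟩, le_refl _⟩,
        fun h => absurd (Finset.mem_filter.1 h).2 (not_le.2 hlt)⟩
    exact Finset.card_lt_card hss
  g1_last i := by
    have hi : (i : ℕ) < n := i.isLt
    show rk S (i : ℕ) ((i : ℕ), ((Fin.last k) : ℕ)) ≤ (n - (i : ℕ)) * k + 1
    rw [show ((Fin.last k) : ℕ) = k from rfl]
    set B : Finset (ℕ × ℕ) := (Finset.Ico ((i:ℕ)+1) n) ×ˢ {k} with hB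
    have hBsub : B ⊆ cellsGe n k (i:ℕ) := by
      intro c hc
      rw [hB, Finset.mem_product, Finset.mem_Ico, Finset.mem_singleton] at hc
      rw [mem_cellsGe]
      omega
    have hsub : (cellsGe n k (i:ℕ)).filter (fun c' => S.entry c' ≤ S.entry ((i:ℕ), k))
        ⊆ (cellsGe n k (i:ℕ)) \ B := by
      intro c' hc'
      rw [Finset.mem_filter] at hc'
      rw [Finset.mem_sdiff]
      refine ⟨hc'.1, fun hcB => ?_⟩
      rw [hB, Finset.mem_product, Finset.mem_Ico, Finset.mem_singleton] at hcB
      have : S.entry ((i:ℕ), k) < S.entry (c'.1, c'.2) := by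
        rw [hcB.2]
        exact entry_col_lt S hcB.1.2 (by omega) hcB.1.1
      rw [Prod.mk.eta] at this
      exact absurd hc'.2 (not_le.2 this)
    have hcard := Finset.card_le_card hsub
    rw [Finset.card_sdiff_of_subset hBsub, card_cellsGe] at hcard
    have hBcard : B.card = n - ((i:ℕ)+1) := by
      rw [hB, Finset.card_product, Nat.card_Ico, Finset.card_singleton, Nat.mul_one]
    rw [hBcard] at hcard
    have harith : (n - (i:ℕ)) * (k+1) = (n - (i:ℕ)) * k + (n - (i:ℕ)) := by ring
    unfold rk
    omega
  g2 i h j := by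
    show rk S i (i, (j:ℕ)) ≤ rk S (i+1) (i+1, (j:ℕ)) + (j:ℕ)
    have hi : i < n := by omega
    have hsplit : rk S i (i, (j:ℕ)) = ((j:ℕ) + 1) + rk S (i+1) (i, (j:ℕ)) := by
      rw [rk_split S i hi, row_count S hi j.isLt]
    have hss : (cellsGe n k (i+1)).filter (fun c' => S.entry c' ≤ S.entry (i, (j:ℕ)))
        ⊂ (cellsGe n k (i+1)).filter (fun c' => S.entry c' ≤ S.entry (i+1, (j:ℕ))) := by
      have hlt : S.entry (i, (j:ℕ)) < S.entry (i+1, (j:ℕ)) :=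
        entry_col_lt S h j.isLt (by omega)
      rw [Finset.ssubset_iff_of_subset
        (Finset.monotone_filter_right _ (fun c' _ hc' => le_trans hc' hlt.le))]
      exact ⟨(i+1, (j:ℕ)),
        Finset.mem_filter.2 ⟨mem_cellsGe.2 ⟨⟨le_refl _, h⟩, j.isLt⟩, le_refl _⟩,
        fun hmem => absurd (Finset.mem_filter.1 hmem).2 (not_le.2 hlt)⟩
    have := Finset.card_lt_card hss
    unfold rk at this hsplit ⊢
    omega

lemma rk_eq_rho : ∀ (dd i : ℕ) (c : ℕ × ℕ), c ∈ cellsGe n k i → c.1 - i = dd →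
    rk S i c = rho (k+1) (Tf (PhiGT S)) i c := by
  intro dd
  induction dd with
  | zero =>
    intro i c hc hd
    rw [mem_cellsGe] at hc
    have hci : c.1 = i := by omega
    subst hci
    rw [rho_self, Tf_eq (PhiGT S) hc.1.2 hc.2]
    show rk S c.1 c = rk S c.1 (c.1, c.2)
    rw [Prod.mk.eta]
  | succ dd IHd =>
    intro i c hc hd
    have hm := mem_cellsGe.1 hc
    have h1 : i < c.1 := by omega
    have hi : i < n := by omega
    have hc' : c ∈ cellsGe n k (i+1) := mem_cellsGe.2 ⟨⟨by omega, hm.1.2⟩, hm.2⟩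
    rw [rho_step _ _ h1, rk_rec S i hi hc', ← IHd (i+1) c hc' (by omega)]
    exact insPhi_congr (fun j hj => by
      rw [Tf_eq (PhiGT S) hi hj]
      rfl) _

end SYTSide
end Stmt4Aux
namespace Stmt4Aux

lemma GoodTableau.ext' {n k : ℕ} {T T' : GoodTableau n k} (h : T.entry = T'.entry) :
    T = T' := by
  cases T; cases T'; cases h; rfl

lemma SkewSYT.ext' {lam mu : ℕ → ℕ} {S S' : SkewSYT lam mu} (h : S.entry = S'.entry) :
    S = S' := by
  cases S; cases S'; cases h; rfl

variable {n k : ℕ}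

lemma psi_phi (T0 : GoodTableau n k) : PhiGT (PsiSYT T0) = T0 := by
  apply GoodTableau.ext'
  funext i j
  show rk (PsiSYT T0) (i:ℕ) ((i:ℕ), (j:ℕ)) = T0.entry i j
  have hi : (i:ℕ) < n := i.isLt
  have hj : (j:ℕ) < k+1 := j.isLt
  have hmem : ((i:ℕ), (j:ℕ)) ∈ cellsGe n k (i:ℕ) := mem_cellsGe.2 ⟨⟨le_refl _, hi⟩, hj⟩
  have hcong : (cellsGe n k (i:ℕ)).filter
        (fun c' => (PsiSYT T0).entry c' ≤ (PsiSYT T0).entry ((i:ℕ),(j:ℕ)))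
      = (cellsGe n k (i:ℕ)).filter
        (fun c' => rho (k+1) (Tf T0) 0 c' ≤ rho (k+1) (Tf T0) 0 ((i:ℕ),(j:ℕ))) := by
    apply Finset.filter_congr
    intro c' hc'
    have h1 : (PsiSYT T0).entry c' = rho (k+1) (Tf T0) 0 c' := by
      show (if c' ∈ cellsGe n k 0 then rho (k+1) (Tf T0) 0 c' else 0)
        = rho (k+1) (Tf T0) 0 c'
      rw [if_pos (cellsGe_subset_zero hc')]
    have h2 : (PsiSYT T0).entry ((i:ℕ),(j:ℕ)) = rho (k+1) (Tf T0) 0 ((i:ℕ),(j:ℕ)) := by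
      show (if ((i:ℕ),(j:ℕ)) ∈ cellsGe n k 0 then rho (k+1) (Tf T0) 0 ((i:ℕ),(j:ℕ)) else 0)
        = rho (k+1) (Tf T0) 0 ((i:ℕ),(j:ℕ))
      rw [if_pos (cellsGe_subset_zero hmem)]
    rw [h1, h2]
  unfold rk
  rw [hcong]
  have := psi_rank T0 hi hj
  rw [this, Tf_eq T0 hi hj]

lemma phi_psi (S : SkewSYT (RectShape n (k+1)) (fun _ => 0)) : PsiSYT (PhiGT S) = S := by
  apply SkewSYT.ext'
  funext c
  show (if c ∈ cellsGe n k 0 then rho (k+1) (Tf (PhiGT S)) 0 c else 0) = S.entry c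
  by_cases hc : c ∈ cellsGe n k 0
  · rw [if_pos hc, ← rk_eq_rho S c.1 0 c hc (Nat.sub_zero c.1), rk_zero S hc]
  · rw [if_neg hc]
    exact (S.entry_outside c (fun h => hc (cell_iff.1 h))).symm

/-- The bijection between good tableaux and rectangular standard Young tableaux. -/
def theEquiv : GoodTableau n k ≃ SkewSYT (RectShape n (k+1)) (fun _ => 0) where
  toFun := PsiSYT
  invFun := PhiGT
  left_inv := psi_phi
  right_inv := phi_psi

end Stmt4Aux
/-- The number of good tableaux of shape `⟨(k+1)^n⟩` equals the number of standard Young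
tableaux of shape `⟨(k+1)^n⟩`. -/
theorem stmt_4 (n k : ℕ) (hn : 1 ≤ n) (hk : 1 ≤ k) :
    Nat.card (GoodTableau n k) =
      Nat.card (SkewSYT (RectShape n (k + 1)) (fun _ => 0)) := by
  exact Nat.card_congr Stmt4Aux.theEquiv
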